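/- If f : X → X is a self-map of a metric space (X,d) such that lim_{n→∞} ω_{f^n}(t) = 0 for every t > 0 (eventually contracting), then for every x ∈ X the orbit sequence (f^n(x))_{n∈ω} is a Cauchy sequence in (X,d). -/

import Mathlib

open Filter Topology ENNReal

/-- The oscillation of a self-map `f` of a metric space. -/
noncomputable def osc {X : Type*} [MetricSpace X] (f : X → X) (t : ℝ≥0∞) : ℝ≥0∞ :=
  ⨆ (x : X) (y : X) (_ : edist x y ≤ t), edist (f x) (f y)

lemma edist_le_osc {X : Type*} [MetricSpace X] (g : X → X) {t : ℝ≥0∞} {a b : X}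
    (h : edist a b ≤ t) : edist (g a) (g b) ≤ osc g t := by
  refine le_trans ?_ (le_iSup _ a)
  refine le_trans ?_ (le_iSup _ b)
  exact le_iSup_of_le h le_rfl

/-- If `f` is eventually contracting (the oscillations of the iterates of `f` tend to zero),
then every orbit of `f` is a Cauchy sequence. -/
theorem orbit_cauchySeq_of_eventually_contracting {X : Type*} [MetricSpace X] (f : X → X)
    (hev : ∀ t : ℝ≥0∞, 0 < t → t ≠ ⊤ → Tendsto (fun n => osc (f^[n]) t) atTop (𝓝 0))
    (x : X) : CauchySeq (fun n => f^[n] x) := by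
  rw [EMetric.cauchySeq_iff]
  intro ε hε
  set δ : ℝ≥0∞ := min (ε / 3) 1 with hδdef
  have hδpos : 0 < δ := lt_min (ENNReal.div_pos hε.ne' (by norm_num)) one_pos
  have hδtop : δ ≠ ⊤ := ((min_le_right _ _).trans_lt (by norm_num)).ne
  have h2δ : 2 * δ < ε := by
    rcases eq_or_ne ε ⊤ with h | h
    · calc 2 * δ ≤ 2 * 1 := by gcongr; exact min_le_right _ _
        _ < ε := by rw [h]; norm_num
    · calc 2 * δ ≤ 2 * (ε / 3) := by gcongr; exact min_le_left _ _
        _ = (2 / 3) * ε := by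
            rw [ENNReal.div_eq_inv_mul, ENNReal.div_eq_inv_mul]; ring
        _ < 1 * ε := by
            rw [ENNReal.mul_lt_mul_iff_left hε.ne' h]
            rw [ENNReal.div_lt_iff (by norm_num) (by norm_num)]; norm_num
        _ = ε := one_mul ε
  -- choose k ≥ 1 with osc (f^[k]) (2δ) < δ
  have h2δpos : 0 < 2 * δ := ENNReal.mul_pos two_ne_zero hδpos.ne'
  have h2δtop : 2 * δ ≠ ⊤ := ENNReal.mul_ne_top (by norm_num) hδtop
  obtain ⟨k, hk1, hkosc⟩ : ∃ k, 1 ≤ k ∧ osc (f^[k]) (2 * δ) < δ := by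
    have := ((hev _ h2δpos h2δtop).eventually (gt_mem_nhds hδpos)).and
      (eventually_ge_atTop 1)
    obtain ⟨k, hk⟩ := this.exists
    exact ⟨k, hk.2, hk.1⟩
  have hδkpos : 0 < δ / k := ENNReal.div_pos hδpos.ne' (by simp)
  -- choose M with consecutive distances < δ/k
  set t0 : ℝ≥0∞ := edist x (f x) + 1 with ht0
  have ht0pos : 0 < t0 := by rw [ht0]; exact lt_of_lt_of_le one_pos le_add_self
  have ht0top : t0 ≠ ⊤ := by simp [ht0, edist_ne_top]
  obtain ⟨M, hM⟩ := (((hev _ ht0pos ht0top).eventually (gt_mem_nhds hδkpos))).exists_forall_of_atTop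
  have hcons : ∀ m, M ≤ m → edist (f^[m] x) (f^[m+1] x) ≤ δ / k := by
    intro m hm
    have : edist (f^[m] x) (f^[m] (f x)) ≤ osc (f^[m]) t0 :=
      edist_le_osc _ (by rw [ht0]; exact le_self_add)
    rw [← Function.iterate_succ_apply] at this
    exact this.trans (hM m hm).le
  -- consecutive sums
  have hsum : ∀ j, ∀ n, M ≤ n → edist (f^[n] x) (f^[n+j] x) ≤ j * (δ / k) := by
    intro j
    induction j with
    | zero => intro n hn; simp
    | succ j ih =>
      intro n hn
      calc edist (f^[n] x) (f^[n+(j+1)] x)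
          ≤ edist (f^[n] x) (f^[n+j] x) + edist (f^[n+j] x) (f^[n+j+1] x) := by
            rw [show n + (j+1) = n + j + 1 by ring]; exact edist_triangle _ _ _
        _ ≤ j * (δ / k) + δ / k := add_le_add (ih n hn) (hcons _ (le_trans hn (Nat.le_add_right _ _)))
        _ = (j + 1 : ℕ) * (δ / k) := by push_cast; ring
  -- main claim
  have main : ∀ j, ∀ n, M ≤ n → edist (f^[n] x) (f^[n+j] x) ≤ 2 * δ := by
    intro j
    induction j using Nat.strong_induction_on with
    | _ j ih =>
      intro n hn
      rcases le_or_gt j k with hjk | hjk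
      · calc edist (f^[n] x) (f^[n+j] x) ≤ j * (δ / k) := hsum j n hn
          _ ≤ k * (δ / k) := mul_le_mul_left (Nat.cast_le.mpr hjk) _
          _ ≤ δ := ENNReal.mul_div_le
          _ ≤ 2 * δ := le_mul_of_one_le_left (zero_le) one_le_two
      · have hjk' : j - k < j := Nat.sub_lt (lt_of_lt_of_le hk1 hjk.le) hk1
        have hrec : edist (f^[n] x) (f^[n + (j - k)] x) ≤ 2 * δ := ih _ hjk' n hn
        have h2 : edist (f^[n+k] x) (f^[n+j] x) ≤ δ := by
          have : edist (f^[k] (f^[n] x)) (f^[k] (f^[n + (j-k)] x)) ≤ osc (f^[k]) (2 * δ) :=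
            edist_le_osc _ hrec
          rw [← Function.iterate_add_apply, ← Function.iterate_add_apply] at this
          rw [show k + (n + (j - k)) = n + j by omega] at this
          rw [Nat.add_comm k n] at this
          exact this.trans hkosc.le
        calc edist (f^[n] x) (f^[n+j] x)
            ≤ edist (f^[n] x) (f^[n+k] x) + edist (f^[n+k] x) (f^[n+j] x) := edist_triangle _ _ _
          _ ≤ δ + δ := by
              refine add_le_add ?_ h2
              calc edist (f^[n] x) (f^[n+k] x) ≤ k * (δ / k) := hsum k n hn
                _ ≤ δ := ENNReal.mul_div_le
          _ = 2 * δ := (two_mul δ).symm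
  refine ⟨M, fun m hm n hn => ?_⟩
  rcases le_total m n with h | h
  · have := main (n - m) m hm
    rw [show m + (n - m) = n by omega] at this
    exact this.trans_lt h2δ
  · have := main (m - n) n hn
    rw [show n + (m - n) = m by omega] at this
    rw [edist_comm]
    exact this.trans_lt h2δ
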